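/- Let P be an F-program with ID-well-founded model (I,J). Then P and its simplification P^{I,J} have the same ID-well-founded model. -/
import Mathlib


inductive Formula (α : Type) : Type 1
  | atom : α → Formula α
  | conj : {ι : Type} → (ι → Formula α) → Formula α
  | disj : {ι : Type} → (ι → Formula α) → Formula α
  | impl : Formula α → Formula α → Formula α

namespace Formula

def fbot {α : Type} : Formula α := .disj (fun i : Empty => i.elim)
def ftop {α : Type} : Formula α := .conj (fun i : Empty => i.elim)

def Sat {α : Type} (I : Set α) : Formula α → Prop
  | .atom a => a ∈ I
  | .conj f => ∀ i, Sat I (f i)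
  | .disj f => ∃ i, Sat I (f i)
  | .impl F G => Sat I F → Sat I G

open Classical in
noncomputable def reduct {α : Type} (I : Set α) : Bool → Formula α → Formula α
  | true, .atom a => .atom a
  | false, .atom a => if a ∈ I then ftop else fbot
  | pol, .conj f => .conj (fun i => reduct I pol (f i))
  | pol, .disj f => .disj (fun i => reduct I pol (f i))
  | true, .impl F G => .impl (reduct I false F) (reduct I true G)
  | false, .impl F G => .impl (reduct I true F) (reduct I false G)

def atomsPol {α : Type} : Bool → Formula α → Set α
  | true, .atom a => {a}
  | false, .atom _ => ∅
  | pol, .conj f => ⋃ i, atomsPol pol (f i)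
  | pol, .disj f => ⋃ i, atomsPol pol (f i)
  | pol, .impl F G => atomsPol (!pol) F ∪ atomsPol pol G

def Positive {α : Type} (F : Formula α) : Prop := atomsPol false F = ∅

open Classical in
noncomputable def freduct {α : Type} (X : Set α) : Formula α → Formula α
  | .atom a => if a ∈ X then .atom a else fbot
  | .conj f => if Sat X (.conj f) then .conj (fun i => freduct X (f i)) else fbot
  | .disj f => if Sat X (.disj f) then .disj (fun i => freduct X (f i)) else fbot
  | .impl F G => if Sat X (.impl F G) then .impl (freduct X F) (freduct X G) else fbot

def noImpl {α : Type} : Formula α → Prop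
  | .atom _ => True
  | .conj f => ∀ i, noImpl (f i)
  | .disj f => ∀ i, noImpl (f i)
  | .impl _ _ => False

def inR {α : Type} : Formula α → Prop
  | .atom _ => True
  | .conj f => ∀ i, inR (f i)
  | .disj f => ∀ i, inR (f i)
  | .impl F G => noImpl F ∧ inR G

end Formula

open Formula

structure Rule (α : Type) : Type 1 where
  head : α
  body : Formula α

abbrev Program (α : Type) := Set (Rule α)

def Tstep {α : Type} (P : Program α) (X : Set α) : Set α :=
  {a | ∃ r ∈ P, r.head = a ∧ Sat X r.body}

noncomputable def progReduct {α : Type} (P : Program α) (I : Set α) : Program α :=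
  (fun r => ⟨r.head, reduct I true r.body⟩) '' P

noncomputable def stableOp {α : Type} (P : Program α) (I : Set α) : Set α :=
  ⋂₀ {X | Tstep (progReduct P I) X ⊆ X}

def precLe {α : Type} (p q : Set α × Set α) : Prop := p.1 ⊆ q.1 ∧ q.2 ⊆ p.2

noncomputable def wfOp {α : Type} (P : Program α) (p : Set α × Set α) : Set α × Set α :=
  (stableOp P p.2, stableOp P p.1)

noncomputable def IsWFModel {α : Type} (P : Program α) (p : Set α × Set α) : Prop :=
  wfOp P p = p ∧ ∀ q, wfOp P q = q → precLe p q

def IsModel {α : Type} (P : Program α) (X : Set α) : Prop :=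
  ∀ r ∈ P, Sat X r.body → r.head ∈ X

noncomputable def freductProg {α : Type} (P : Program α) (X : Set α) : Program α :=
  (fun r => ⟨r.head, freduct X r.body⟩) '' P

noncomputable def StableModel {α : Type} (P : Program α) (X : Set α) : Prop :=
  IsModel (freductProg P X) X ∧ ∀ Y, IsModel (freductProg P X) Y → Y ⊆ X → Y = X

noncomputable def simpProg {α : Type} (P : Program α) (I J : Set α) : Program α :=
  {r | r ∈ P ∧ Sat J (reduct I true r.body)}

noncomputable def relStable {α : Type} (P : Program α) (Ir J : Set α) : Set α :=
  ⋂₀ {X | Tstep (progReduct P J) (Ir ∪ X) ⊆ X}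

noncomputable def relWF {α : Type} (P : Program α) (r p : Set α × Set α) : Set α × Set α :=
  (relStable P r.1 (p.2 ∪ r.2), relStable P r.2 (p.1 ∪ r.1))


section Aux
variable {α : Type}

lemma sat_ftop (X : Set α) : Sat X (ftop (α := α)) := fun i => i.elim

lemma not_sat_fbot (X : Set α) : ¬ Sat X (fbot (α := α)) := fun ⟨i, _⟩ => i.elim

lemma sat_mono : ∀ (F : Formula α) (K X X' : Set α), X ⊆ X' →
    (Sat X (reduct K true F) → Sat X' (reduct K true F)) ∧
    (Sat X' (reduct K false F) → Sat X (reduct K false F)) := by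
  intro F
  induction F with
  | atom a =>
    intro K X X' h
    constructor
    · intro hs; exact h hs
    · intro hs
      simp only [reduct] at hs ⊢
      by_cases ha : a ∈ K
      · simp only [ha, if_pos] at *; exact sat_ftop X
      · simp only [ha, if_neg, not_false_iff] at hs
        exact absurd hs (not_sat_fbot X')
  | conj f ih =>
    intro K X X' h
    exact ⟨fun hs i => (ih i K X X' h).1 (hs i), fun hs i => (ih i K X X' h).2 (hs i)⟩
  | disj f ih =>
    intro K X X' h
    exact ⟨fun ⟨i, hs⟩ => ⟨i, (ih i K X X' h).1 hs⟩, fun ⟨i, hs⟩ => ⟨i, (ih i K X X' h).2 hs⟩⟩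
  | impl F G ihF ihG =>
    intro K X X' h
    constructor
    · intro hs hF
      exact (ihG K X X' h).1 (hs ((ihF K X X' h).2 hF))
    · intro hs hF
      exact (ihG K X X' h).2 (hs ((ihF K X X' h).1 hF))

lemma sat_anti : ∀ (F : Formula α) (K K' X : Set α), K ⊆ K' →
    (Sat X (reduct K' true F) → Sat X (reduct K true F)) ∧
    (Sat X (reduct K false F) → Sat X (reduct K' false F)) := by
  intro F
  induction F with
  | atom a =>
    intro K K' X h
    constructor
    · intro hs; exact hs
    · intro hs
      simp only [reduct] at hs ⊢
      by_cases ha : a ∈ K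
      · simp only [h ha, if_pos]; exact sat_ftop X
      · simp only [ha, if_neg, not_false_iff] at hs
        exact absurd hs (not_sat_fbot X)
  | conj f ih =>
    intro K K' X h
    exact ⟨fun hs i => (ih i K K' X h).1 (hs i), fun hs i => (ih i K K' X h).2 (hs i)⟩
  | disj f ih =>
    intro K K' X h
    exact ⟨fun ⟨i, hs⟩ => ⟨i, (ih i K K' X h).1 hs⟩, fun ⟨i, hs⟩ => ⟨i, (ih i K K' X h).2 hs⟩⟩
  | impl F G ihF ihG =>
    intro K K' X h
    constructor
    · intro hs hF
      exact (ihG K K' X h).1 (hs ((ihF K K' X h).2 hF))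
    · intro hs hF
      exact (ihG K K' X h).2 (hs ((ihF K K' X h).1 hF))

lemma mem_Tstep_reduct {P : Program α} {K X : Set α} {a : α} :
    a ∈ Tstep (progReduct P K) X ↔
      ∃ r ∈ P, r.head = a ∧ Sat X (reduct K true r.body) := by
  constructor
  · rintro ⟨r, hr, hh, hs⟩
    obtain ⟨s, hs', rfl⟩ := hr
    exact ⟨s, hs', hh, hs⟩
  · rintro ⟨r, hr, hh, hs⟩
    exact ⟨⟨r.head, reduct K true r.body⟩, ⟨r, hr, rfl⟩, hh, hs⟩

lemma stableOp_le {P : Program α} {K Y : Set α}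
    (h : Tstep (progReduct P K) Y ⊆ Y) : stableOp P K ⊆ Y :=
  Set.sInter_subset_of_mem h

lemma stableOp_pre {P : Program α} {K : Set α} :
    Tstep (progReduct P K) (stableOp P K) ⊆ stableOp P K := by
  intro a ha
  rw [stableOp, Set.mem_sInter]
  intro Y hY
  refine hY ?_
  rw [mem_Tstep_reduct] at ha
  obtain ⟨r, hr, hh, hs⟩ := ha
  exact mem_Tstep_reduct.2 ⟨r, hr, hh,
    (sat_mono r.body K _ Y (stableOp_le hY)).1 hs⟩

lemma stableOp_anti {P : Program α} {K K' : Set α} (h : K ⊆ K') :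
    stableOp P K' ⊆ stableOp P K := by
  refine Set.subset_sInter fun Y hY => stableOp_le ?_
  intro a ha
  rw [mem_Tstep_reduct] at ha
  obtain ⟨r, hr, hh, hs⟩ := ha
  exact hY (mem_Tstep_reduct.2 ⟨r, hr, hh, (sat_anti r.body K K' Y h).1 hs⟩)

lemma stableOp_subprog {P Q : Program α} {K : Set α} (h : Q ⊆ P) :
    stableOp Q K ⊆ stableOp P K := by
  refine Set.subset_sInter fun Y hY => stableOp_le ?_
  intro a ha
  rw [mem_Tstep_reduct] at ha
  obtain ⟨r, hr, hh, hs⟩ := ha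
  exact hY (mem_Tstep_reduct.2 ⟨r, h hr, hh, hs⟩)

lemma simpProg_subset {P : Program α} {I J : Set α} : simpProg P I J ⊆ P :=
  fun _ hr => hr.1

lemma stable_simp_eq {P : Program α} {I J X : Set α} (hIJ : I ⊆ J) (hIX : I ⊆ X)
    (hMJ : stableOp P X ⊆ J) :
    stableOp (simpProg P I J) X = stableOp P X := by
  refine subset_antisymm (stableOp_subprog simpProg_subset) ?_
  set M := stableOp P X with hM
  refine Set.subset_sInter fun Y hY => ?_
  have hpre : Tstep (progReduct P X) (Y ∩ M) ⊆ Y ∩ M := by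
    intro a ha
    rw [mem_Tstep_reduct] at ha
    obtain ⟨r, hr, hh, hs⟩ := ha
    have hsY : Sat Y (reduct X true r.body) :=
      (sat_mono r.body X (Y ∩ M) Y Set.inter_subset_left).1 hs
    have hsM : Sat M (reduct X true r.body) :=
      (sat_mono r.body X (Y ∩ M) M Set.inter_subset_right).1 hs
    have hQ : r ∈ simpProg P I J := by
      refine ⟨hr, ?_⟩
      have h1 : Sat (Y ∩ M) (reduct I true r.body) :=
        (sat_anti r.body I X (Y ∩ M) hIX).1 hs
      exact (sat_mono r.body I (Y ∩ M) J (Set.inter_subset_right.trans hMJ)).1 h1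
    refine ⟨hY (mem_Tstep_reduct.2 ⟨r, hQ, hh, hsY⟩), ?_⟩
    exact stableOp_pre (mem_Tstep_reduct.2 ⟨r, hr, hh, hsM⟩)
  exact (stableOp_le hpre).trans Set.inter_subset_left

/-! Knaster–Tarski for `precLe`. -/

lemma precLe_refl (p : Set α × Set α) : precLe p p := ⟨subset_rfl, subset_rfl⟩

lemma precLe_trans {p q r : Set α × Set α} (h1 : precLe p q) (h2 : precLe q r) :
    precLe p r := ⟨h1.1.trans h2.1, h2.2.trans h1.2⟩

lemma precLe_antisymm {p q : Set α × Set α} (h1 : precLe p q) (h2 : precLe q p) :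
    p = q := Prod.ext (h1.1.antisymm h2.1) (h2.2.antisymm h1.2)

def prePts (G : Set α × Set α → Set α × Set α) : Set (Set α × Set α) :=
  {q | precLe (G q) q}

noncomputable def plfp (G : Set α × Set α → Set α × Set α) : Set α × Set α :=
  (⋂ q ∈ prePts G, q.1, ⋃ q ∈ prePts G, q.2)

lemma plfp_le {G : Set α × Set α → Set α × Set α} {q : Set α × Set α}
    (hq : q ∈ prePts G) : precLe (plfp G) q :=
  ⟨Set.biInter_subset_of_mem hq, Set.subset_biUnion_of_mem hq⟩

lemma le_plfp {G : Set α × Set α → Set α × Set α} {p : Set α × Set α}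
    (h : ∀ q ∈ prePts G, precLe p q) : precLe p (plfp G) :=
  ⟨Set.subset_iInter₂ fun q hq => (h q hq).1, Set.iUnion₂_subset fun q hq => (h q hq).2⟩

lemma plfp_fixed {G : Set α × Set α → Set α × Set α}
    (hm : ∀ p q, precLe p q → precLe (G p) (G q)) : G (plfp G) = plfp G := by
  have hGm : precLe (G (plfp G)) (plfp G) :=
    le_plfp fun q hq => precLe_trans (hm _ _ (plfp_le hq)) hq
  exact precLe_antisymm hGm (plfp_le (hm _ _ hGm))

lemma wfOp_mono {P : Program α} : ∀ p q, precLe p q → precLe (wfOp P p) (wfOp P q) :=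
  fun _ _ h => ⟨stableOp_anti h.2, stableOp_anti h.1⟩

end Aux

/-- A program and its simplification w.r.t. its well-founded model have the same
well-founded model. -/
theorem stmt14 {α : Type} (P : Program α) (I J : Set α)
    (hWF : IsWFModel P (I, J)) : IsWFModel (simpProg P I J) (I, J) := by
  set Q := simpProg P I J with hQ
  have h1 : stableOp P J = I := congrArg Prod.fst hWF.1
  have h2 : stableOp P I = J := congrArg Prod.snd hWF.1
  have hIJ : I ⊆ J := by
    have hfix : wfOp P (J, I) = (J, I) := by
      simp only [wfOp, h1, h2]
    exact (hWF.2 _ hfix).1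
  have e2 : stableOp Q I = J := by
    rw [hQ, stable_simp_eq hIJ subset_rfl (h2 ▸ subset_rfl), h2]
  have e1 : stableOp Q J = I := by
    rw [hQ, stable_simp_eq hIJ hIJ (h1 ▸ hIJ), h1]
  have hfixQ : wfOp Q (I, J) = (I, J) := by
    simp only [wfOp, e1, e2]
  refine ⟨hfixQ, ?_⟩
  intro q hq
  -- the Knaster–Tarski least fixpoint of `wfOp Q`
  set m := plfp (wfOp Q) with hm
  have hfixm : wfOp Q m = m := plfp_fixed wfOp_mono
  have hmIJ : precLe m (I, J) := plfp_le (by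
    show precLe (wfOp Q (I, J)) (I, J)
    rw [hfixQ]; exact precLe_refl _)
  have hB : J ⊆ m.2 := hmIJ.2
  have hSB : stableOp P m.2 ⊆ J := (stableOp_anti hB).trans (h1 ▸ hIJ)
  have eB : stableOp Q m.2 = stableOp P m.2 :=
    hQ ▸ stable_simp_eq hIJ (hIJ.trans hB) hSB
  have hP : precLe (wfOp P m) m := by
    constructor
    · show stableOp P m.2 ⊆ m.1
      rw [← eB]
      exact (congrArg Prod.fst hfixm) ▸ subset_rfl
    · show m.2 ⊆ stableOp P m.1
      have : stableOp Q m.1 = m.2 := congrArg Prod.snd hfixm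
      exact this ▸ stableOp_subprog simpProg_subset
  -- (I, J) is the least pre-fixpoint of wfOp P
  have hPlfp : plfp (wfOp P) = (I, J) := by
    have hfixP : wfOp P (plfp (wfOp P)) = plfp (wfOp P) := plfp_fixed wfOp_mono
    refine precLe_antisymm (plfp_le ?_) (hWF.2 _ hfixP)
    show precLe (wfOp P (I, J)) (I, J)
    rw [hWF.1]; exact precLe_refl _
  have hIJm : precLe (I, J) m := hPlfp ▸ plfp_le hP
  refine precLe_trans hIJm (plfp_le ?_)
  show precLe (wfOp Q q) q
  rw [hq]; exact precLe_refl _
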